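/- arXiv:2211.06492 — 3 statements merged into one kernel-verified Lean document; each statement's English description precedes it below -/
import Mathlib

section
/- Let ℓ : ℝ → [0,∞) be convex and nonincreasing. Then for any a, b, c, d ∈ ℝ with a + b + c + d = 0 and s := (1/2)·max{|a+b|, |a+c|, |a+d|}: (ℓ(a)+ℓ(b)+ℓ(c)+ℓ(d))/4 ≥ (ℓ(s)+ℓ(−s))/2. -/
theorem stmt_9 (ℓ : ℝ → ℝ) (hconv : ConvexOn ℝ Set.univ ℓ) (hmono : Antitone ℓ)
    (hnn : ∀ x, 0 ≤ ℓ x) (a b c d : ℝ) (hsum : a + b + c + d = 0)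
    (s : ℝ) (hs : s = (1/2) * max |a + b| (max |a + c| |a + d|)) :
    (ℓ s + ℓ (-s)) / 2 ≤ (ℓ a + ℓ b + ℓ c + ℓ d) / 4 := by
  have jen : ∀ x y : ℝ, ℓ ((x + y) / 2) ≤ (ℓ x + ℓ y) / 2 := by
    intro x y
    have := hconv.2 (Set.mem_univ x) (Set.mem_univ y)
      (by norm_num : (0:ℝ) ≤ 1/2) (by norm_num : (0:ℝ) ≤ 1/2) (by norm_num)
    simp only [smul_eq_mul] at this
    have hx : (1/2:ℝ) * x + (1/2) * y = (x + y) / 2 := by ring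
    rw [hx] at this; linarith
  -- for a pairing x+y = u, other pair sums to -u
  have key : ∀ x y z w : ℝ, x + y + z + w = 0 →
      ℓ ((x + y) / 2) + ℓ (-((x + y) / 2)) ≤ (ℓ x + ℓ y + ℓ z + ℓ w) / 2 := by
    intro x y z w h
    have h1 := jen x y
    have h2 := jen z w
    have hz : (z + w) / 2 = -((x + y) / 2) := by linarith
    rw [hz] at h2
    linarith
  have habs : ∀ u : ℝ, ℓ |u| + ℓ (-|u|) = ℓ u + ℓ (-u) := by
    intro u
    rcases abs_cases u with ⟨h, _⟩ | ⟨h, _⟩ <;> rw [h] <;> ring_nf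
  rcases max_cases |a + b| (max |a + c| |a + d|) with ⟨h1, _⟩ | ⟨h1, h1'⟩
  · have hk := key a b c d hsum
    have : s = |(a + b) / 2| := by rw [hs, h1, abs_div]; norm_num; ring
    rw [this, habs]; linarith
  · rcases max_cases |a + c| |a + d| with ⟨h2, _⟩ | ⟨h2, _⟩
    · have hk := key a c b d (by linarith)
      have : s = |(a + c) / 2| := by rw [hs, h1, h2, abs_div]; norm_num; ring
      rw [this, habs]; linarith
    · have hk := key a d b c (by linarith)
      have : s = |(a + d) / 2| := by rw [hs, h1, h2, abs_div]; norm_num; ring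
      rw [this, habs]; linarith
end

section
/- Let ℓ : ℝ → [0,∞) be convex and nonincreasing, and let a, b, c, d ∈ ℝ with a + b + c + d = 0. Then (ℓ(a)+ℓ(b)+ℓ(c)+ℓ(d))/4 ≥ (ℓ(|a|/3) + ℓ(−|a|/3))/2. -/
theorem stmt_11 (ℓ : ℝ → ℝ) (hconv : ConvexOn ℝ Set.univ ℓ) (hmono : Antitone ℓ)
    (hnn : ∀ x, 0 ≤ ℓ x) (a b c d : ℝ) (hsum : a + b + c + d = 0) :
    (ℓ (|a| / 3) + ℓ (-(|a| / 3))) / 2 ≤ (ℓ a + ℓ b + ℓ c + ℓ d) / 4 := by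
  have mid : ∀ x y : ℝ, ℓ ((x + y) / 2) ≤ (ℓ x + ℓ y) / 2 := by
    intro x y
    have h := hconv.2 (Set.mem_univ x) (Set.mem_univ y)
      (by norm_num : (0:ℝ) ≤ 1/2) (by norm_num : (0:ℝ) ≤ 1/2) (by norm_num)
    simp only [smul_eq_mul] at h
    have he : (1/2:ℝ) * x + (1/2:ℝ) * y = (x + y) / 2 := by ring
    rw [he] at h
    linarith
  have gmono : ∀ u v : ℝ, 0 ≤ u → u ≤ v → ℓ u + ℓ (-u) ≤ ℓ v + ℓ (-v) := by
    intro u v hu huv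
    rcases eq_or_lt_of_le (hu.trans huv) with hv | hv
    · have hu0 : u = 0 := le_antisymm (huv.trans hv.ge) hu
      rw [hu0, ← hv]
    · have hvne : v ≠ 0 := ne_of_gt hv
      set t := (v + u) / (2 * v) with ht
      have ht0 : 0 ≤ t := by
        apply div_nonneg <;> nlinarith
      have ht1 : 0 ≤ 1 - t := by
        rw [ht, sub_nonneg, div_le_one (by linarith)]
        linarith
      have h1 := hconv.2 (Set.mem_univ v) (Set.mem_univ (-v)) ht0 ht1 (by ring)
      have h2 := hconv.2 (Set.mem_univ v) (Set.mem_univ (-v)) ht1 ht0 (by ring)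
      simp only [smul_eq_mul] at h1 h2
      have e1 : t * v + (1 - t) * (-v) = u := by
        rw [ht]; field_simp; ring
      have e2 : (1 - t) * v + t * (-v) = -u := by
        rw [ht]; field_simp; ring
      rw [e1] at h1; rw [e2] at h2
      linarith
  have pair : ∀ x y z w : ℝ, x + y + z + w = 0 →
      ℓ (|x + y| / 2) + ℓ (-(|x + y| / 2)) ≤ (ℓ x + ℓ y + ℓ z + ℓ w) / 2 := by
    intro x y z w hs
    have h1 := mid x y
    have h2 := mid z w
    have hzw : (z + w) / 2 = -((x + y) / 2) := by linarith
    rw [hzw] at h2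
    rcases abs_choice (x + y) with h | h
    · rw [h]; linarith
    · rw [h]
      have : -(-(x + y) / 2) = (x + y) / 2 := by ring
      rw [this]
      have : -(x + y) / 2 = -((x + y) / 2) := by ring
      rw [this]
      linarith
  set M := max (max |a + b| |a + c|) |a + d| with hM
  have hM1 : |a + b| ≤ M := le_max_of_le_left (le_max_left _ _)
  have hM2 : |a + c| ≤ M := le_max_of_le_left (le_max_right _ _)
  have hM3 : |a + d| ≤ M := le_max_right _ _
  have haM : |a| / 3 ≤ M / 2 := by
    have h2a : 2 * a = (a + b) + (a + c) + (a + d) := by linarith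
    have : |2 * a| ≤ |a + b| + |a + c| + |a + d| := by
      rw [h2a]
      calc |(a + b) + (a + c) + (a + d)| ≤ |(a + b) + (a + c)| + |a + d| := abs_add_le _ _
        _ ≤ |a + b| + |a + c| + |a + d| := by linarith [abs_add_le (a + b) (a + c)]
    rw [abs_mul, abs_two] at this
    linarith
  have key : ℓ (M / 2) + ℓ (-(M / 2)) ≤ (ℓ a + ℓ b + ℓ c + ℓ d) / 2 := by
    rcases max_cases (max |a + b| |a + c|) |a + d| with ⟨h, _⟩ | ⟨h, _⟩
    · rw [hM, h]
      rcases max_cases |a + b| |a + c| with ⟨h', _⟩ | ⟨h', _⟩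
      · rw [h']
        exact pair a b c d hsum
      · rw [h']
        have := pair a c b d (by linarith)
        linarith
    · rw [hM, h]
      have := pair a d b c (by linarith)
      linarith
  have hg := gmono (|a| / 3) (M / 2) (by positivity) haM
  linarith
end

section
/- Let W, V be n-qubit unitaries of product form W = W₁⊗⋯⊗Wₙ, V = V₁⊗⋯⊗Vₙ, let U = U₁⊗⋯⊗Uₙ be a product of single-qubit unitaries, U' = U₁⊗I⊗⋯⊗I, V' = V₁⊗I⊗⋯⊗I, and let M₁ = [[0,0],[0,1]]⊗I_{2^{n-1}}. Then for every unit vector ψ ∈ ℂ^{2^n}: ⟨ψ| V†W†U† M₁ UWV |ψ⟩ = ⟨ψ| V'†W†U'† M₁ U'WV' |ψ⟩. -/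
open Matrix

/-- Kronecker (tensor) product of `n` single-qubit (2×2) matrices, acting on
`(Fin n → Fin 2)`-indexed coordinates. -/
def tensorN (n : ℕ) (Us : Fin n → Matrix (Fin 2) (Fin 2) ℂ) :
    Matrix (Fin n → Fin 2) (Fin n → Fin 2) ℂ :=
  Matrix.of fun f g => ∏ i, Us i (f i) (g i)

/-- The measurement operator `M₁ = |1⟩⟨1| ⊗ I`. -/
def Mproj (n : ℕ) : Matrix (Fin (n+1) → Fin 2) (Fin (n+1) → Fin 2) ℂ :=
  Matrix.of fun f g => if f = g ∧ f 0 = 1 then 1 else 0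

private def Eproj : Matrix (Fin 2) (Fin 2) ℂ :=
  Matrix.of fun a b => if a = b ∧ a = 1 then 1 else 0

private lemma tensorN_mul (n : ℕ) (A B : Fin n → Matrix (Fin 2) (Fin 2) ℂ) :
    tensorN n A * tensorN n B = tensorN n (fun i => A i * B i) := by
  ext f g
  simp only [tensorN, Matrix.mul_apply, Matrix.of_apply]
  rw [Finset.prod_univ_sum, ← Fintype.piFinset_univ]
  refine Finset.sum_congr rfl fun h _ => ?_
  rw [Finset.prod_mul_distrib]

private lemma tensorN_conjT (n : ℕ) (A : Fin n → Matrix (Fin 2) (Fin 2) ℂ) :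
    (tensorN n A)ᴴ = tensorN n (fun i => (A i)ᴴ) := by
  ext f g
  simp [tensorN, Matrix.conjTranspose_apply]

private lemma Mproj_eq (n : ℕ) :
    Mproj n = tensorN (n+1) (fun i => if i = 0 then Eproj else 1) := by
  ext f g
  simp only [Mproj, tensorN, Matrix.of_apply]
  have key : ∀ i : Fin (n+1), (if i = 0 then Eproj else 1) (f i) (g i)
      = if f i = g i ∧ (i = 0 → f i = 1) then 1 else 0 := by
    intro i
    by_cases h : i = 0
    · subst h
      simp only [if_pos rfl, Eproj, Matrix.of_apply]
      by_cases h1 : f 0 = g 0 <;> by_cases h2 : f 0 = 1 <;> simp [h1, h2]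
    · simp only [if_neg h, Matrix.one_apply]
      by_cases h1 : f i = g i <;> simp [h1, h]
  rw [Finset.prod_congr rfl (fun i _ => key i), Finset.prod_boole]
  by_cases hfg : f = g
  · subst hfg
    by_cases h0 : f 0 = 1 <;> simp [h0]
  · rw [if_neg (fun h => hfg h.1), if_neg]
    intro h
    exact hfg (funext fun i => (h i (Finset.mem_univ i)).1)

theorem stmt_19 (n : ℕ)
    (Us Ws Vs : Fin (n+1) → Matrix (Fin 2) (Fin 2) ℂ)
    (hUs : ∀ i, Us i ∈ Matrix.unitaryGroup (Fin 2) ℂ)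
    (hWs : ∀ i, Ws i ∈ Matrix.unitaryGroup (Fin 2) ℂ)
    (hVs : ∀ i, Vs i ∈ Matrix.unitaryGroup (Fin 2) ℂ)
    (U W V U' V' : Matrix (Fin (n+1) → Fin 2) (Fin (n+1) → Fin 2) ℂ)
    (hU : U = tensorN (n+1) Us) (hW : W = tensorN (n+1) Ws)
    (hV : V = tensorN (n+1) Vs)
    (hU' : U' = tensorN (n+1) (fun i => if i = 0 then Us 0 else 1))
    (hV' : V' = tensorN (n+1) (fun i => if i = 0 then Vs 0 else 1))
    (ψ : (Fin (n+1) → Fin 2) → ℂ) (hψ : star ψ ⬝ᵥ ψ = 1) :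
    star ψ ⬝ᵥ ((Vᴴ * Wᴴ * Uᴴ * Mproj n * U * W * V) *ᵥ ψ)
      = star ψ ⬝ᵥ ((V'ᴴ * Wᴴ * U'ᴴ * Mproj n * U' * W * V') *ᵥ ψ) := by
  have hUu : ∀ i, (Us i)ᴴ * Us i = 1 := fun i => by
    rw [← Matrix.star_eq_conjTranspose]; exact (Unitary.mem_iff.mp (hUs i)).1
  have hWu : ∀ i, (Ws i)ᴴ * Ws i = 1 := fun i => by
    rw [← Matrix.star_eq_conjTranspose]; exact (Unitary.mem_iff.mp (hWs i)).1
  have hVu : ∀ i, (Vs i)ᴴ * Vs i = 1 := fun i => by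
    rw [← Matrix.star_eq_conjTranspose]; exact (Unitary.mem_iff.mp (hVs i)).1
  have key : Vᴴ * Wᴴ * Uᴴ * Mproj n * U * W * V
      = V'ᴴ * Wᴴ * U'ᴴ * Mproj n * U' * W * V' := by
    subst hU hW hV hU' hV'
    simp only [tensorN_conjT, Mproj_eq, tensorN_mul]
    refine congrArg (tensorN (n+1)) (funext fun i => ?_)
    by_cases h : i = 0
    · simp [h]
    · have e1 : (Vs i)ᴴ * (Ws i)ᴴ * (Us i)ᴴ * 1 * Us i * Ws i * Vs i = 1 := by
        rw [mul_one, mul_assoc ((Vs i)ᴴ * (Ws i)ᴴ), hUu i, mul_one,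
          mul_assoc ((Vs i)ᴴ), hWu i, mul_one, hVu i]
      have e2 : ((1 : Matrix (Fin 2) (Fin 2) ℂ))ᴴ * (Ws i)ᴴ * 1ᴴ * 1 * 1 * Ws i * 1 = 1 := by
        simp [hWu i]
      simp only [if_neg h]
      rw [e1, e2]
  rw [key]
end
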